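/- arXiv:2510.18978 — 2 statements merged into one kernel-verified Lean document; each statement's English description precedes it below -/
import Mathlib

section
/- Let f : ℝ^n → ℝ be differentiable at φ. If u is uniformly distributed on the unit sphere S^{n−1} ⊆ ℝ^n, then the two-point zero-order gradient estimate (n/(2ε))·(f(φ + εu) − f(φ − εu))·u converges in expectation to ∇f(φ) as ε → 0; that is, lim_{ε→0} E[(n/(2ε))(f(φ+εu) − f(φ−εu))u] = ∇f(φ). -/
open MeasureTheory Real Filter

noncomputable section Stmt4Aux

variable {n : ℕ}

lemma stmt4_normsq (u : EuclideanSpace ℝ (Fin n)) :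
    ∑ k : Fin n, u k * u k = ‖u‖ ^ 2 := by
  rw [EuclideanSpace.norm_eq, Real.sq_sqrt (Finset.sum_nonneg fun k _ => sq_nonneg _)]
  exact Finset.sum_congr rfl fun k _ => by rw [Real.norm_eq_abs, sq_abs]; ring

lemma stmt4_coord_le (u : EuclideanSpace ℝ (Fin n)) (i : Fin n) : |u i| ≤ ‖u‖ := by
  have h1 : |u i| ^ 2 ≤ ∑ k : Fin n, u k * u k := by
    rw [sq_abs]
    have := Finset.single_le_sum (f := fun k : Fin n => u k * u k)
      (fun k _ => mul_self_nonneg _) (Finset.mem_univ i)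
    simpa [sq] using this
  rw [stmt4_normsq] at h1
  nlinarith [abs_nonneg (u i), norm_nonneg u]

lemma stmt4_ae_norm (μ : Measure (EuclideanSpace ℝ (Fin n))) [IsProbabilityMeasure μ]
    (hsupp : μ (Metric.sphere (0 : EuclideanSpace ℝ (Fin n)) 1)ᶜ = 0) :
    ∀ᵐ u ∂μ, ‖u‖ = 1 := by
  have : ∀ᵐ u ∂μ, u ∈ Metric.sphere (0 : EuclideanSpace ℝ (Fin n)) 1 :=
    (MeasureTheory.mem_ae_iff.mpr hsupp)
  filter_upwards [this] with u hu
  simpa [mem_sphere_zero_iff_norm] using hu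

lemma stmt4_integ_mul (μ : Measure (EuclideanSpace ℝ (Fin n))) [IsProbabilityMeasure μ]
    (hsupp : μ (Metric.sphere (0 : EuclideanSpace ℝ (Fin n)) 1)ᶜ = 0) (i j : Fin n) :
    Integrable (fun u : EuclideanSpace ℝ (Fin n) => u i * u j) μ := by
  have hc : Continuous (fun u : EuclideanSpace ℝ (Fin n) => u i * u j) :=
    ((EuclideanSpace.proj i).continuous.mul (EuclideanSpace.proj j).continuous)
  refine (integrable_const (1:ℝ)).mono' hc.aestronglyMeasurable ?_
  filter_upwards [stmt4_ae_norm μ hsupp] with u hu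
  have hi : |u i| ≤ 1 := hu ▸ stmt4_coord_le u i
  have hj : |u j| ≤ 1 := hu ▸ stmt4_coord_le u j
  calc ‖u i * u j‖ = |u i| * |u j| := abs_mul _ _
    _ ≤ 1 * 1 := by gcongr
    _ = 1 := one_mul 1

lemma stmt4_moment (μ : Measure (EuclideanSpace ℝ (Fin n))) [IsProbabilityMeasure μ]
    (hsupp : μ (Metric.sphere (0 : EuclideanSpace ℝ (Fin n)) 1)ᶜ = 0)
    (hinv : ∀ R : EuclideanSpace ℝ (Fin n) ≃ₗᵢ[ℝ] EuclideanSpace ℝ (Fin n),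
      μ.map R = μ) (i j : Fin n) :
    ∫ u, u i * u j ∂μ = if i = j then (1:ℝ)/n else 0 := by
  classical
  have key : ∀ (R : EuclideanSpace ℝ (Fin n) ≃ₗᵢ[ℝ] EuclideanSpace ℝ (Fin n)) (k l : Fin n),
      ∫ u, u k * u l ∂μ = ∫ u, (R u) k * (R u) l ∂μ := by
    intro R k l
    conv_lhs => rw [← hinv R]
    rw [integral_map R.continuous.aemeasurable]
    exact ((EuclideanSpace.proj k).continuous.mul
      (EuclideanSpace.proj l).continuous).aestronglyMeasurable
  by_cases hij : i = j
  · subst hij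
    simp only [if_pos rfl]
    have hswap : ∀ k l : Fin n, ∫ u, u k * u k ∂μ = ∫ u, u l * u l ∂μ := by
      intro k l
      rw [key (LinearIsometryEquiv.piLpCongrLeft 2 ℝ ℝ (Equiv.swap k l)) k k]
      congr 1
      funext u
      simp only [LinearIsometryEquiv.piLpCongrLeft_apply, Equiv.piCongrLeft'_apply,
        Equiv.symm_swap]
      rw [Equiv.swap_apply_left]
    have hsum : ∑ k : Fin n, ∫ u, u k * u k ∂μ = 1 := by
      rw [← integral_finset_sum _ (fun k _ => stmt4_integ_mul μ hsupp k k)]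
      have hae : ∀ᵐ u ∂μ, (∑ k : Fin n, u k * u k) = (1:ℝ) := by
        filter_upwards [stmt4_ae_norm μ hsupp] with u hu
        rw [stmt4_normsq, hu, one_pow]
      rw [integral_congr_ae hae]
      simp
    have hpos : (0:ℕ) < n := i.pos
    have hn : (n:ℝ) ≠ 0 := Nat.cast_ne_zero.mpr hpos.ne'
    have heq : (n : ℝ) * ∫ u, u i * u i ∂μ = 1 := by
      rw [← hsum, Finset.sum_congr rfl (fun k _ => hswap k i)]
      simp [Finset.card_fin, mul_comm]
    rw [if_pos trivial, eq_div_iff hn]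
    linarith [heq]
  · simp only [if_neg hij]
    set R := LinearIsometryEquiv.piLpCongrRight (𝕜 := ℝ) 2
      (fun k : Fin n => if k = i then LinearIsometryEquiv.neg ℝ else
        LinearIsometryEquiv.refl ℝ ℝ) with hR
    have h1 := key R i j
    have hRi : ∀ u : EuclideanSpace ℝ (Fin n), (R u) i = -(u i) := by
      intro u; simp [hR, LinearIsometryEquiv.piLpCongrRight_apply]
    have hRj : ∀ u : EuclideanSpace ℝ (Fin n), (R u) j = u j := by
      intro u; simp [hR, LinearIsometryEquiv.piLpCongrRight_apply, Ne.symm hij]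
    have h2 : ∫ u, (R u) i * (R u) j ∂μ = -∫ u, u i * u j ∂μ := by
      rw [← integral_neg]
      congr 1; funext u; rw [hRi, hRj]; ring
    rw [h2] at h1
    linarith [h1]

end Stmt4Aux

noncomputable section Stmt4Key

variable {n : ℕ}

lemma stmt4_integ_inner (μ : Measure (EuclideanSpace ℝ (Fin n))) [IsProbabilityMeasure μ]
    (hsupp : μ (Metric.sphere (0 : EuclideanSpace ℝ (Fin n)) 1)ᶜ = 0)
    (v : EuclideanSpace ℝ (Fin n)) :
    Integrable (fun u : EuclideanSpace ℝ (Fin n) =>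
      ((n : ℝ) * (inner ℝ v u : ℝ)) • u) μ := by
  have hc : Continuous (fun u : EuclideanSpace ℝ (Fin n) => ((n : ℝ) * (inner ℝ v u : ℝ)) • u) := by
    exact (continuous_const.mul (continuous_const.inner (𝕜 := ℝ) continuous_id)).smul continuous_id
  refine (integrable_const ((n:ℝ) * ‖v‖)).mono' hc.aestronglyMeasurable ?_
  filter_upwards [stmt4_ae_norm μ hsupp] with u hu
  have h1 : |(inner ℝ v u : ℝ)| ≤ ‖v‖ := by
    have := abs_real_inner_le_norm v u
    simpa [hu] using this
  rw [norm_smul, hu, mul_one]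
  calc ‖(n:ℝ) * (inner ℝ v u : ℝ)‖ = (n:ℝ) * |(inner ℝ v u : ℝ)| := by
        rw [Real.norm_eq_abs, abs_mul, Nat.abs_cast]
    _ ≤ (n:ℝ) * ‖v‖ := by gcongr

lemma stmt4_key (μ : Measure (EuclideanSpace ℝ (Fin n))) [IsProbabilityMeasure μ]
    (hsupp : μ (Metric.sphere (0 : EuclideanSpace ℝ (Fin n)) 1)ᶜ = 0)
    (hinv : ∀ R : EuclideanSpace ℝ (Fin n) ≃ₗᵢ[ℝ] EuclideanSpace ℝ (Fin n),
      μ.map R = μ) (v : EuclideanSpace ℝ (Fin n)) :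
    ∫ u, ((n : ℝ) * (inner ℝ v u : ℝ)) • u ∂μ = v := by
  classical
  have hint := stmt4_integ_inner μ hsupp v
  ext i
  have hcomm := (EuclideanSpace.proj (𝕜 := ℝ) i).integral_comp_comm hint
  have : (∫ u, ((n : ℝ) * (inner ℝ v u : ℝ)) • u ∂μ) i
      = ∫ u, ((n : ℝ) * (inner ℝ v u : ℝ)) * u i ∂μ := by
    calc (∫ u, ((n : ℝ) * (inner ℝ v u : ℝ)) • u ∂μ) i
        = EuclideanSpace.proj (𝕜 := ℝ) i (∫ u, ((n : ℝ) * (inner ℝ v u : ℝ)) • u ∂μ) := rfl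
      _ = ∫ u, EuclideanSpace.proj (𝕜 := ℝ) i (((n : ℝ) * (inner ℝ v u : ℝ)) • u) ∂μ := hcomm.symm
      _ = ∫ u, ((n : ℝ) * (inner ℝ v u : ℝ)) * u i ∂μ := by simp
  rw [this]
  have hexp : ∀ u : EuclideanSpace ℝ (Fin n),
      ((n : ℝ) * (inner ℝ v u : ℝ)) * u i = ∑ j : Fin n, ((n : ℝ) * v j) * (u j * u i) := by
    intro u
    rw [PiLp.inner_apply]
    simp only [RCLike.inner_apply, conj_trivial]
    rw [Finset.mul_sum, Finset.sum_mul]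
    exact Finset.sum_congr rfl fun j _ => by ring
  rw [integral_congr_ae (Filter.Eventually.of_forall fun u => hexp u)]
  rw [integral_finset_sum _ (fun j _ => ((stmt4_integ_mul μ hsupp j i).const_mul _))]
  have : ∀ j : Fin n, ∫ u, ((n : ℝ) * v j) * (u j * u i) ∂μ
      = if j = i then v j else 0 := by
    intro j
    rw [integral_const_mul, stmt4_moment μ hsupp hinv j i]
    by_cases h : j = i
    · have hn : (n:ℝ) ≠ 0 := Nat.cast_ne_zero.mpr i.pos.ne'
      simp [h]
      field_simp
    · simp [h]
  rw [Finset.sum_congr rfl fun j _ => this j]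
  simp

end Stmt4Key
/-- The two-point zero-order gradient estimate converges in expectation to the gradient. -/
theorem stmt_4 {n : ℕ} (μ : Measure (EuclideanSpace ℝ (Fin n)))
    [IsProbabilityMeasure μ]
    (hsupp : μ (Metric.sphere (0 : EuclideanSpace ℝ (Fin n)) 1)ᶜ = 0)
    (hinv : ∀ R : EuclideanSpace ℝ (Fin n) ≃ₗᵢ[ℝ] EuclideanSpace ℝ (Fin n),
      μ.map R = μ)
    (f : EuclideanSpace ℝ (Fin n) → ℝ) (φ : EuclideanSpace ℝ (Fin n))
    (hf : ∃ U : Set (EuclideanSpace ℝ (Fin n)), IsOpen U ∧ φ ∈ U ∧ ContDiffOn ℝ 1 f U) :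
    Tendsto
      (fun ε : ℝ =>
        ∫ u, (((n : ℝ) / (2 * ε)) * (f (φ + ε • u) - f (φ - ε • u))) • u ∂μ)
      (nhdsWithin 0 (Set.Ioi 0)) (nhds (gradient f φ)) := by
  classical
  obtain ⟨U, hU, hφU, hC1⟩ := hf
  have h_ae := stmt4_ae_norm μ hsupp
  have hres : μ.restrict (Metric.sphere (0 : EuclideanSpace ℝ (Fin n)) 1) = μ :=
    Measure.restrict_eq_self_of_ae_mem (MeasureTheory.mem_ae_iff.mpr hsupp)
  have hdiff : DifferentiableAt ℝ f φ :=
    (hC1.contDiffAt (hU.mem_nhds hφU)).differentiableAt one_ne_zero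
  set f' := fderiv ℝ f φ with hf'def
  obtain ⟨r, hr0, hball⟩ := (Metric.nhds_basis_closedBall.mem_iff).mp (hU.mem_nhds hφU)
  have hdiffOn : ∀ x ∈ Metric.closedBall φ r, DifferentiableAt ℝ f x := fun x hx =>
    (hC1.contDiffAt (hU.mem_nhds (hball hx))).differentiableAt one_ne_zero
  have hcontf' : ContinuousOn (fderiv ℝ f) U :=
    hC1.continuousOn_fderiv_of_isOpen hU le_rfl
  obtain ⟨M, hM⟩ :=
    (isCompact_closedBall φ r).exists_bound_of_continuousOn (hcontf'.mono hball)
  set C := max M 0 with hCdef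
  have hC0 : 0 ≤ C := le_max_right _ _
  have hfc : ContinuousOn f U := hC1.continuousOn
  -- membership lemmas
  have hmem : ∀ (ε : ℝ), 0 < ε → ε ≤ r → ∀ u : EuclideanSpace ℝ (Fin n), ‖u‖ = 1 →
      φ + ε • u ∈ Metric.closedBall φ r ∧ φ - ε • u ∈ Metric.closedBall φ r := by
    intro ε hε hεr u hu
    constructor <;>
    · rw [Metric.mem_closedBall, dist_eq_norm]
      simp only [add_sub_cancel_left, sub_sub_cancel_left, norm_neg, norm_smul, hu,
        Real.norm_eq_abs, abs_of_pos hε, mul_one]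
      exact hεr
  -- mean value bound
  have hMVT : ∀ (ε : ℝ), 0 < ε → ε ≤ r → ∀ u : EuclideanSpace ℝ (Fin n), ‖u‖ = 1 →
      |f (φ + ε • u) - f (φ - ε • u)| ≤ C * (2 * ε) := by
    intro ε hε hεr u hu
    obtain ⟨hm1, hm2⟩ := hmem ε hε hεr u hu
    have hbd : ∀ x ∈ Metric.closedBall φ r, ‖fderiv ℝ f x‖ ≤ C :=
      fun x hx => le_trans (hM x hx) (le_max_left _ _)
    have := Convex.norm_image_sub_le_of_norm_fderiv_le hdiffOn hbd
      (convex_closedBall φ r) hm2 hm1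
    have hd : ‖(φ + ε • u) - (φ - ε • u)‖ = 2 * ε := by
      have h2 : (φ + ε • u) - (φ - ε • u) = (2 * ε) • u := by
        rw [two_mul, add_smul]; abel
      rw [h2, norm_smul, hu, mul_one, Real.norm_eq_abs, abs_of_pos (by linarith)]
    rw [hd] at this
    exact this
  -- rewrite the limit as an integral
  have hgrad_inner : ∀ u : EuclideanSpace ℝ (Fin n),
      (inner ℝ (gradient f φ) u : ℝ) = f' u := fun u =>
    InnerProductSpace.toDual_symm_apply
  have hgoal_int : ∫ u, ((n : ℝ) * f' u) • u ∂μ = gradient f φ := by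
    rw [← stmt4_key μ hsupp hinv (gradient f φ)]
    congr 1
    funext u
    rw [hgrad_inner]
  rw [← hgoal_int]
  refine tendsto_integral_filter_of_dominated_convergence (fun _ => (n : ℝ) * C)
    ?_ ?_ (integrable_const _) ?_
  · -- measurability
    filter_upwards [Ioc_mem_nhdsGT_of_mem (Set.left_mem_Ico.mpr hr0)] with ε hε
    obtain ⟨hε0, hεr⟩ := hε
    have hsm : MeasurableSet (Metric.sphere (0 : EuclideanSpace ℝ (Fin n)) 1) :=
      Metric.isClosed_sphere.measurableSet
    have hcontOn : ContinuousOn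
        (fun u : EuclideanSpace ℝ (Fin n) =>
          (((n : ℝ) / (2 * ε)) * (f (φ + ε • u) - f (φ - ε • u))) • u)
        (Metric.sphere (0 : EuclideanSpace ℝ (Fin n)) 1) := by
      have hmap1 : Set.MapsTo (fun u : EuclideanSpace ℝ (Fin n) => φ + ε • u)
          (Metric.sphere (0 : EuclideanSpace ℝ (Fin n)) 1) U := by
        intro u hu
        exact hball (hmem ε hε0 hεr u (by simpa [mem_sphere_zero_iff_norm] using hu)).1
      have hmap2 : Set.MapsTo (fun u : EuclideanSpace ℝ (Fin n) => φ - ε • u)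
          (Metric.sphere (0 : EuclideanSpace ℝ (Fin n)) 1) U := by
        intro u hu
        exact hball (hmem ε hε0 hεr u (by simpa [mem_sphere_zero_iff_norm] using hu)).2
      have hc1 : ContinuousOn (fun u : EuclideanSpace ℝ (Fin n) => f (φ + ε • u))
          (Metric.sphere (0 : EuclideanSpace ℝ (Fin n)) 1) :=
        hfc.comp ((continuous_const.add (continuous_const_smul ε)).continuousOn) hmap1
      have hc2 : ContinuousOn (fun u : EuclideanSpace ℝ (Fin n) => f (φ - ε • u))
          (Metric.sphere (0 : EuclideanSpace ℝ (Fin n)) 1) :=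
        hfc.comp ((continuous_const.sub (continuous_const_smul ε)).continuousOn) hmap2
      exact (continuousOn_const.mul (hc1.sub hc2)).smul continuousOn_id
    have := hcontOn.aestronglyMeasurable (μ := μ) hsm
    rwa [hres] at this
  · -- bound
    filter_upwards [Ioc_mem_nhdsGT_of_mem (Set.left_mem_Ico.mpr hr0)] with ε hε
    obtain ⟨hε0, hεr⟩ := hε
    filter_upwards [h_ae] with u hu
    rw [norm_smul, hu, mul_one, Real.norm_eq_abs, abs_mul]
    have h1 : |(n : ℝ) / (2 * ε)| = (n : ℝ) / (2 * ε) :=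
      abs_of_nonneg (by positivity)
    rw [h1]
    calc ((n : ℝ) / (2 * ε)) * |f (φ + ε • u) - f (φ - ε • u)|
        ≤ ((n : ℝ) / (2 * ε)) * (C * (2 * ε)) := by
          gcongr
          exact hMVT ε hε0 hεr u hu
      _ = (n : ℝ) * C := by
          field_simp
  · -- pointwise limit
    refine Filter.Eventually.of_forall (fun u => ?_)
    have c1 : HasDerivAt (fun t : ℝ => φ + t • u) u 0 := by
      simpa using ((hasDerivAt_id (0 : ℝ)).smul_const u).const_add φ
    have c2 : HasDerivAt (fun t : ℝ => φ - t • u) (-u) 0 := by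
      simpa using ((hasDerivAt_id (0 : ℝ)).smul_const u).const_sub φ
    have hF1 : HasFDerivAt f f' (φ + (0 : ℝ) • u) := by
      rw [show φ + (0 : ℝ) • u = φ by simp]
      exact hdiff.hasFDerivAt
    have hF2 : HasFDerivAt f f' (φ - (0 : ℝ) • u) := by
      rw [show φ - (0 : ℝ) • u = φ by simp]
      exact hdiff.hasFDerivAt
    have d1 : HasDerivAt (fun t : ℝ => f (φ + t • u)) (f' u) 0 :=
      hF1.comp_hasDerivAt 0 c1
    have d2 : HasDerivAt (fun t : ℝ => f (φ - t • u)) (f' (-u)) 0 :=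
      hF2.comp_hasDerivAt 0 c2
    have dh : HasDerivAt (fun t : ℝ => f (φ + t • u) - f (φ - t • u)) (2 * f' u) 0 := by
      have := d1.sub d2
      rwa [map_neg, sub_neg_eq_add, ← two_mul] at this
    have hslope := hasDerivAt_iff_tendsto_slope.mp dh
    have hmono : (nhdsWithin (0 : ℝ) (Set.Ioi 0)) ≤ (nhdsWithin (0 : ℝ) {(0 : ℝ)}ᶜ) :=
      nhdsWithin_mono 0 (fun x hx => ne_of_gt hx)
    have h2 : Tendsto (fun ε : ℝ => slope (fun t : ℝ => f (φ + t • u) - f (φ - t • u)) 0 ε)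
        (nhdsWithin (0 : ℝ) (Set.Ioi 0)) (nhds (2 * f' u)) := hslope.mono_left hmono
    have h3 : Tendsto (fun ε : ℝ =>
        (((n : ℝ) / 2) * slope (fun t : ℝ => f (φ + t • u) - f (φ - t • u)) 0 ε) • u)
        (nhdsWithin (0 : ℝ) (Set.Ioi 0)) (nhds ((((n : ℝ) / 2) * (2 * f' u)) • u)) :=
      (h2.const_mul ((n : ℝ) / 2)).smul_const u
    have hval : (((n : ℝ) / 2) * (2 * f' u)) • u = ((n : ℝ) * f' u) • u := by
      congr 1
      ring
    rw [hval] at h3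
    refine h3.congr' ?_
    filter_upwards [self_mem_nhdsWithin] with ε hε
    have hε0 : (ε : ℝ) ≠ 0 := ne_of_gt hε
    rw [slope_def_field]
    congr 1
    simp only [zero_smul, add_zero, sub_zero, smul_zero]
    field_simp
    ring
end

section
/- For a linear function f(x) = ⟨g, x⟩ + c on ℝ^n, the zero-order estimator (n/(2ε))(f(φ + εu) − f(φ − εu))u with u uniform on the unit sphere is an unbiased estimator of the gradient: its expectation equals g for every ε > 0 and every φ. -/
open MeasureTheory Real
open scoped RealInnerProductSpace

section Aux
variable {n : ℕ} (μ : Measure (EuclideanSpace ℝ (Fin n))) [IsProbabilityMeasure μ]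

lemma ae_sphere (hsupp : μ (Metric.sphere (0 : EuclideanSpace ℝ (Fin n)) 1)ᶜ = 0) :
    ∀ᵐ u ∂μ, ‖u‖ = 1 := by
  have : ∀ᵐ u ∂μ, u ∈ Metric.sphere (0 : EuclideanSpace ℝ (Fin n)) 1 := ae_iff.2 hsupp
  filter_upwards [this] with u hu using by simpa [mem_sphere_zero_iff_norm] using hu

lemma abs_coord_le {u : EuclideanSpace ℝ (Fin n)} (i : Fin n) : |u i| ≤ ‖u‖ := by
  have := abs_real_inner_le_norm (EuclideanSpace.single i (1:ℝ)) u
  simpa [EuclideanSpace.inner_single_left, EuclideanSpace.norm_single] using this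

lemma integ_aux (hsupp : μ (Metric.sphere (0 : EuclideanSpace ℝ (Fin n)) 1)ᶜ = 0)
    {h : EuclideanSpace ℝ (Fin n) → ℝ} (hc : Continuous h) (C : ℝ)
    (hb : ∀ u : EuclideanSpace ℝ (Fin n), ‖u‖ = 1 → ‖h u‖ ≤ C) : Integrable h μ := by
  refine (integrable_const C).mono' hc.aestronglyMeasurable ?_
  filter_upwards [ae_sphere μ hsupp] with u hu using hb u hu

omit [IsProbabilityMeasure μ] in
lemma change_var (hinv : ∀ R : EuclideanSpace ℝ (Fin n) ≃ₗᵢ[ℝ] EuclideanSpace ℝ (Fin n),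
      μ.map R = μ) (R : EuclideanSpace ℝ (Fin n) ≃ₗᵢ[ℝ] EuclideanSpace ℝ (Fin n))
    {h : EuclideanSpace ℝ (Fin n) → ℝ} (hc : Continuous h) :
    ∫ u, h u ∂μ = ∫ u, h (R u) ∂μ := by
  conv_lhs => rw [← hinv R]
  rw [integral_map R.continuous.aemeasurable hc.aestronglyMeasurable]

lemma cont_mul (i j : Fin n) :
    Continuous fun u : EuclideanSpace ℝ (Fin n) => u i * u j :=
  ((EuclideanSpace.proj i).continuous.mul (EuclideanSpace.proj j).continuous)

lemma integ_mul (hsupp : μ (Metric.sphere (0 : EuclideanSpace ℝ (Fin n)) 1)ᶜ = 0)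
    (i j : Fin n) : Integrable (fun u => u i * u j) μ := by
  refine integ_aux μ hsupp (cont_mul i j) 1 (fun u hu => ?_)
  calc ‖u i * u j‖ = |u i| * |u j| := abs_mul _ _
    _ ≤ ‖u‖ * ‖u‖ := mul_le_mul (abs_coord_le i) (abs_coord_le j) (abs_nonneg _) (norm_nonneg _)
    _ = 1 := by rw [hu]; ring

lemma off_diag (hsupp : μ (Metric.sphere (0 : EuclideanSpace ℝ (Fin n)) 1)ᶜ = 0)
    (hinv : ∀ R : EuclideanSpace ℝ (Fin n) ≃ₗᵢ[ℝ] EuclideanSpace ℝ (Fin n), μ.map R = μ)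
    {i j : Fin n} (hij : i ≠ j) : ∫ u, u i * u j ∂μ = 0 := by
  set R := LinearIsometryEquiv.piLpCongrRight 2
      (fun k : Fin n => if k = i then LinearIsometryEquiv.neg ℝ else .refl ℝ ℝ) with hR
  have hRa : ∀ (u : EuclideanSpace ℝ (Fin n)) k, R u k = if k = i then -u k else u k := by
    intro u k
    simp only [hR, LinearIsometryEquiv.piLpCongrRight_apply]
    by_cases h : k = i
    · subst h; simp
    · simp [h]
  have h1 : ∫ u, u i * u j ∂μ = ∫ u, (R u) i * (R u) j ∂μ :=
    change_var μ hinv R (cont_mul i j)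
  have h2 : ∀ u : EuclideanSpace ℝ (Fin n), (R u) i * (R u) j = -(u i * u j) := by
    intro u; rw [hRa, hRa]; simp [hij.symm]
  simp only [h2, integral_neg] at h1
  linarith

omit [IsProbabilityMeasure μ] in
lemma diag_eq (hinv : ∀ R : EuclideanSpace ℝ (Fin n) ≃ₗᵢ[ℝ] EuclideanSpace ℝ (Fin n),
      μ.map R = μ) (i j : Fin n) : ∫ u, u i * u i ∂μ = ∫ u, u j * u j ∂μ := by
  set R := LinearIsometryEquiv.piLpCongrLeft 2 ℝ ℝ (Equiv.swap i j) with hR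
  have h2 : ∀ u : EuclideanSpace ℝ (Fin n), (R u) i = u j := by
    intro u
    simp only [hR, LinearIsometryEquiv.piLpCongrLeft_apply, Equiv.piCongrLeft'_apply,
      Equiv.symm_swap]
    exact congrArg u (Equiv.swap_apply_left i j)
  have h1 : ∫ u, u i * u i ∂μ = ∫ u, (R u) i * (R u) i ∂μ :=
    change_var μ hinv R (cont_mul i i)
  simpa [h2] using h1

lemma diag_val (hsupp : μ (Metric.sphere (0 : EuclideanSpace ℝ (Fin n)) 1)ᶜ = 0)
    (hinv : ∀ R : EuclideanSpace ℝ (Fin n) ≃ₗᵢ[ℝ] EuclideanSpace ℝ (Fin n), μ.map R = μ)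
    (i : Fin n) : ∫ u, u i * u i ∂μ = (1:ℝ) / n := by
  have hn : 0 < n := i.pos
  have hsum : ∑ j : Fin n, ∫ u, u j * u j ∂μ = 1 := by
    rw [← integral_finset_sum _ (fun j _ => integ_mul μ hsupp j j)]
    have : ∫ u : EuclideanSpace ℝ (Fin n), ∑ j, u j * u j ∂μ
        = ∫ _ : EuclideanSpace ℝ (Fin n), (1:ℝ) ∂μ := by
      refine integral_congr_ae ?_
      filter_upwards [ae_sphere μ hsupp] with u hu
      rw [show ∑ j, u j * u j = ‖u‖^2 by
        rw [← real_inner_self_eq_norm_sq, PiLp.inner_apply]; simp [RCLike.inner_apply]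
        exact Finset.sum_congr rfl fun _ _ => (sq _).symm]
      rw [hu]; norm_num
    rw [this]; simp
  have hall : ∀ j, ∫ u, u j * u j ∂μ = ∫ u, u i * u i ∂μ := fun j => diag_eq μ hinv j i
  rw [Finset.sum_congr rfl (fun j _ => hall j), Finset.sum_const] at hsum
  simp only [Finset.card_univ, Fintype.card_fin, nsmul_eq_mul] at hsum
  field_simp
  simp only [sq]
  linarith

lemma second_moment (hsupp : μ (Metric.sphere (0 : EuclideanSpace ℝ (Fin n)) 1)ᶜ = 0)
    (hinv : ∀ R : EuclideanSpace ℝ (Fin n) ≃ₗᵢ[ℝ] EuclideanSpace ℝ (Fin n), μ.map R = μ)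
    (i j : Fin n) : ∫ u, u i * u j ∂μ = if i = j then (1:ℝ) / n else 0 := by
  by_cases h : i = j
  · subst h; simp [diag_val μ hsupp hinv i]
  · simp [h, off_diag μ hsupp hinv h]

end Aux

/-- For affine `f`, the two-point zero-order estimator is unbiased for the gradient. -/
theorem stmt_6 {n : ℕ} (μ : Measure (EuclideanSpace ℝ (Fin n)))
    [IsProbabilityMeasure μ]
    (hsupp : μ (Metric.sphere (0 : EuclideanSpace ℝ (Fin n)) 1)ᶜ = 0)
    (hinv : ∀ R : EuclideanSpace ℝ (Fin n) ≃ₗᵢ[ℝ] EuclideanSpace ℝ (Fin n),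
      μ.map R = μ)
    (g : EuclideanSpace ℝ (Fin n)) (c : ℝ)
    (f : EuclideanSpace ℝ (Fin n) → ℝ) (hf : ∀ x, f x = ⟪g, x⟫ + c)
    (ε : ℝ) (hε : 0 < ε) (φ : EuclideanSpace ℝ (Fin n)) :
    (∫ u, (((n : ℝ) / (2 * ε)) * (f (φ + ε • u) - f (φ - ε • u))) • u ∂μ) = g := by
  have key : ∀ u : EuclideanSpace ℝ (Fin n),
      ((n : ℝ) / (2 * ε)) * (f (φ + ε • u) - f (φ - ε • u)) = n * ⟪g, u⟫ := by
    intro u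
    rw [hf, hf, inner_add_right, inner_sub_right, real_inner_smul_right]
    field_simp
    ring
  simp only [key]
  rcases Nat.eq_zero_or_pos n with hn | hn
  · subst hn
    exact Subsingleton.elim _ _
  · have hFcont : Continuous fun u : EuclideanSpace ℝ (Fin n) => ((n : ℝ) * ⟪g, u⟫) • u := by
      exact (continuous_const.mul (Continuous.inner (𝕜 := ℝ) continuous_const (continuous_id : Continuous fun u : EuclideanSpace ℝ (Fin n) => u))).smul
        continuous_id
    have hF : Integrable (fun u : EuclideanSpace ℝ (Fin n) => ((n : ℝ) * ⟪g, u⟫) • u) μ := by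
      refine (integrable_const ((n : ℝ) * ‖g‖)).mono' hFcont.aestronglyMeasurable ?_
      filter_upwards [ae_sphere μ hsupp] with u hu
      rw [norm_smul, hu, mul_one]
      calc ‖(n : ℝ) * ⟪g, u⟫‖ = (n : ℝ) * |⟪g, u⟫| := by
            simp [Real.norm_eq_abs, abs_mul, Nat.abs_cast]
        _ ≤ (n : ℝ) * (‖g‖ * ‖u‖) := by
            exact mul_le_mul_of_nonneg_left (abs_real_inner_le_norm g u) (Nat.cast_nonneg n)
        _ = (n : ℝ) * ‖g‖ := by rw [hu, mul_one]
    refine PiLp.ext fun i => ?_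
    have hproj : (∫ u, ((n : ℝ) * ⟪g, u⟫) • u ∂μ) i
        = ∫ u, ((n : ℝ) * ⟪g, u⟫) * u i ∂μ := by
      have := (EuclideanSpace.proj (𝕜 := ℝ) i).integral_comp_comm hF
      simpa using this.symm
    rw [hproj]
    have hinner : ∀ u : EuclideanSpace ℝ (Fin n),
        ((n : ℝ) * ⟪g, u⟫) * u i = ∑ j, (n : ℝ) * g j * (u j * u i) := by
      intro u
      rw [PiLp.inner_apply]
      simp only [RCLike.inner_apply, conj_trivial]
      rw [Finset.mul_sum, Finset.sum_mul]
      exact Finset.sum_congr rfl fun j _ => by ring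
    simp only [hinner]
    rw [integral_finset_sum _ (fun j _ => (integ_mul μ hsupp j i).const_mul _)]
    have : ∀ j, ∫ u, (n : ℝ) * g j * (u j * u i) ∂μ
        = (n : ℝ) * g j * (if j = i then (1:ℝ)/n else 0) := by
      intro j
      rw [integral_const_mul, second_moment μ hsupp hinv j i]
    simp only [this, mul_ite, mul_zero]
    rw [Finset.sum_ite_eq' Finset.univ i (fun j => (n : ℝ) * g j * ((1:ℝ)/n))]
    simp only [Finset.mem_univ, if_true]
    field_simp
end
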